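/- Let 1 ≤ α < 2 and let f : (0,1] → ℝ be locally absolutely continuous with ∫_0^1 x^α f'(x)² dx < ∞, and such that x ↦ x^α f'(x) agrees a.e. on (0,1) with an absolutely continuous function F on [0,1] whose derivative F' lies in L²(0,1). Then F(x) → 0 as x → 0⁺ (i.e. x^α f'(x) tends to 0 at the degeneracy point), and moreover |F(x)| ≤ C √x for all x ∈ (0,1), with C = (∫_0^1 F'(s)² ds)^{1/2}. -/

import Mathlib

open MeasureTheory Set Filter

/-- `u` is absolutely continuous on `[c,d]` with (a.e.) derivative `u'`,
encoded via the fundamental theorem of calculus. -/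
def AbsContOnWith (u u' : ℝ → ℝ) (c d : ℝ) : Prop :=
  IntervalIntegrable u' volume c d ∧
    ∀ x ∈ Icc c d, u x = u c + ∫ t in c..x, u' t

/-- Cauchy–Schwarz bound for the integral of `G` over `Ioo 0 x`. -/
lemma cs_bound (G : ℝ → ℝ) (x : ℝ) (hx0 : 0 < x) (hx1 : x ≤ 1)
    (hm : AEStronglyMeasurable G (volume.restrict (Ioo (0:ℝ) 1)))
    (hsq : IntegrableOn (fun s => G s ^ 2) (Ioo (0:ℝ) 1) volume) :
    |∫ s in Ioo (0:ℝ) x, G s| ≤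
      Real.sqrt (∫ s in Ioo (0:ℝ) 1, G s ^ 2) * Real.sqrt x := by
  have sub : Ioo (0:ℝ) x ⊆ Ioo (0:ℝ) 1 := Ioo_subset_Ioo le_rfl hx1
  have hm' : AEStronglyMeasurable G (volume.restrict (Ioo (0:ℝ) x)) :=
    hm.mono_measure (Measure.restrict_mono sub le_rfl)
  have hsq' : IntegrableOn (fun s => G s ^ 2) (Ioo (0:ℝ) x) volume := hsq.mono_set sub
  have hfin : IsFiniteMeasure (volume.restrict (Ioo (0:ℝ) x)) := by
    constructor
    simp only [Measure.restrict_apply_univ, Real.volume_Ioo]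
    exact ENNReal.ofReal_lt_top
  have hG2 : MemLp G 2 (volume.restrict (Ioo (0:ℝ) x)) :=
    (memLp_two_iff_integrable_sq hm').2 hsq'
  have h1 : MemLp (fun _ : ℝ => (1:ℝ)) 2 (volume.restrict (Ioo (0:ℝ) x)) := memLp_const 1
  have hpq : Real.HolderConjugate 2 2 := (Real.holderConjugate_iff_eq_conjExponent (by norm_num)).2 (by norm_num)
  have key := integral_mul_le_Lp_mul_Lq_of_nonneg (μ := volume.restrict (Ioo (0:ℝ) x)) hpq
    (f := fun s => |G s|) (g := fun _ => (1:ℝ))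
    (Eventually.of_forall fun s => abs_nonneg _)
    (Eventually.of_forall fun s => zero_le_one)
    (by rw [show (fun s => |G s|) = |G| from rfl]; simpa using hG2.abs) (by simpa using h1)
  simp only [mul_one] at key
  have e1 : (fun s : ℝ => |G s| ^ (2:ℝ)) = fun s => G s ^ 2 := by
    funext s
    rw [show ((2:ℝ)) = ((2:ℕ):ℝ) by norm_num, Real.rpow_natCast, sq_abs]
  rw [e1] at key
  have e2 : ∫ s in Ioo (0:ℝ) x, (1:ℝ) ^ (2:ℝ) = x := by
    simp [Real.volume_Ioo, ENNReal.toReal_ofReal hx0.le, hx0.le]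
  have habs : |∫ s in Ioo (0:ℝ) x, G s| ≤ ∫ s in Ioo (0:ℝ) x, |G s| := by
    simpa [Real.norm_eq_abs] using
      norm_integral_le_integral_norm (μ := volume.restrict (Ioo (0:ℝ) x)) G
  have hmono : (∫ s in Ioo (0:ℝ) x, G s ^ 2) ≤ ∫ s in Ioo (0:ℝ) 1, G s ^ 2 :=
    setIntegral_mono_set hsq (Eventually.of_forall fun s => sq_nonneg _)
      (HasSubset.Subset.eventuallyLE sub)
  calc |∫ s in Ioo (0:ℝ) x, G s| ≤ ∫ s in Ioo (0:ℝ) x, |G s| := habs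
    _ ≤ (∫ s in Ioo (0:ℝ) x, G s ^ 2) ^ ((1:ℝ)/2)
        * (∫ s in Ioo (0:ℝ) x, (1:ℝ) ^ (2:ℝ)) ^ ((1:ℝ)/2) := key
    _ = Real.sqrt (∫ s in Ioo (0:ℝ) x, G s ^ 2) * Real.sqrt x := by
        rw [e2, Real.sqrt_eq_rpow, Real.sqrt_eq_rpow]
    _ ≤ Real.sqrt (∫ s in Ioo (0:ℝ) 1, G s ^ 2) * Real.sqrt x :=
        mul_le_mul_of_nonneg_right (Real.sqrt_le_sqrt hmono) (Real.sqrt_nonneg x)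

/-- Let `1 ≤ α < 2` and let `f : (0,1] → ℝ` be locally absolutely
continuous (with derivative `f'`) with `∫_0^1 x^α f'(x)² dx < ∞`, such that
`x ↦ x^α f'(x)` agrees a.e. on `(0,1)` with an absolutely continuous function `F`
on `[0,1]` whose derivative `F'` lies in `L²(0,1)`. Then `F(x) → 0` as `x → 0⁺`,
and `|F(x)| ≤ C √x` on `(0,1)` with `C = (∫_0^1 F'(s)² ds)^{1/2}`. -/
theorem stmt3 (α : ℝ) (hα1 : 1 ≤ α) (hα2 : α < 2)
    (f f' F F' : ℝ → ℝ)
    (hAC : ∀ c : ℝ, 0 < c → c ≤ 1 → AbsContOnWith f f' c 1)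
    (hw : IntegrableOn (fun x => x ^ α * (f' x) ^ 2) (Ioo (0 : ℝ) 1) volume)
    (hflux : ∀ᵐ x ∂(volume.restrict (Ioo (0 : ℝ) 1)), F x = x ^ α * f' x)
    (hFAC : AbsContOnWith F F' 0 1)
    (hF' : IntegrableOn (fun x => (F' x) ^ 2) (Ioo (0 : ℝ) 1) volume) :
    Tendsto F (nhdsWithin 0 (Ioi 0)) (nhds 0) ∧
      ∀ x ∈ Ioo (0 : ℝ) 1,
        |F x| ≤ Real.sqrt (∫ s in Ioo (0 : ℝ) 1, (F' s) ^ 2) * Real.sqrt x := by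
  obtain ⟨hint, hrep⟩ := hFAC
  set C := Real.sqrt (∫ s in Ioo (0 : ℝ) 1, (F' s) ^ 2) with hC
  have hCnn : 0 ≤ C := Real.sqrt_nonneg _
  have hmF' : AEStronglyMeasurable F' (volume.restrict (Ioo (0:ℝ) 1)) := by
    have h := hint.1.aestronglyMeasurable
    exact h.mono_measure (Measure.restrict_mono Ioo_subset_Ioc_self le_rfl)
  -- main bound: |F x - F 0| ≤ C * √x for x ∈ Icc 0 1
  have key : ∀ x ∈ Icc (0:ℝ) 1, |F x - F 0| ≤ C * Real.sqrt x := by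
    intro x hx
    rcases eq_or_lt_of_le hx.1 with h0 | h0
    · simp [← h0]
    have hrepx := hrep x hx
    have heq : F x - F 0 = ∫ s in Ioo (0:ℝ) x, F' s := by
      rw [hrepx, intervalIntegral.integral_of_le hx.1, ← integral_Ioc_eq_integral_Ioo]
      ring
    rw [heq]
    exact cs_bound F' x h0 hx.2 hmF' hF'
  -- F 0 = 0
  have hF0 : F 0 = 0 := by
    by_contra hne
    set c := |F 0| with hc
    have hcpos : 0 < c := abs_pos.mpr hne
    set δ : ℝ := min 1 ((c / (2 * (C + 1))) ^ 2) with hδ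
    have hδpos : 0 < δ := lt_min one_pos (by positivity)
    have hδ1 : δ ≤ 1 := min_le_left _ _
    have hsub : Ioo (0:ℝ) δ ⊆ Ioo (0:ℝ) 1 := Ioo_subset_Ioo le_rfl hδ1
    have hlower : ∀ x ∈ Ioo (0:ℝ) δ, c / 2 ≤ |F x| := by
      intro x hx
      have hx1 : x ≤ 1 := le_trans hx.2.le hδ1
      have hb := key x ⟨hx.1.le, hx1⟩
      have hsx : Real.sqrt x ≤ c / (2 * (C + 1)) := by
        have hxle : x ≤ (c / (2 * (C + 1))) ^ 2 := le_trans hx.2.le (min_le_right _ _)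
        calc Real.sqrt x ≤ Real.sqrt ((c / (2 * (C + 1))) ^ 2) := Real.sqrt_le_sqrt hxle
          _ = c / (2 * (C + 1)) := Real.sqrt_sq (by positivity)
      have hCx : C * Real.sqrt x ≤ c / 2 := by
        calc C * Real.sqrt x ≤ C * (c / (2 * (C + 1))) :=
              mul_le_mul_of_nonneg_left hsx hCnn
          _ ≤ (C + 1) * (c / (2 * (C + 1))) :=
              mul_le_mul_of_nonneg_right (by linarith) (by positivity)
          _ = c / 2 := by field_simp
      have htri := abs_sub_abs_le_abs_sub (F 0) (F x)
      have habs : |F x - F 0| = |F 0 - F x| := abs_sub_comm _ _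
      have : |F 0 - F x| ≤ c / 2 := le_trans (habs ▸ hb) hCx
      linarith [htri, this]
    -- a.e. lower bound on the weighted integrand on Ioo 0 δ
    have hfluxδ : ∀ᵐ x ∂(volume.restrict (Ioo (0:ℝ) δ)), F x = x ^ α * f' x :=
      ae_restrict_of_ae_restrict_of_subset hsub hflux
    have haelb : ∀ᵐ x ∂(volume.restrict (Ioo (0:ℝ) δ)),
        ‖(c / 2) ^ 2 * x ^ (-α)‖ ≤ x ^ α * (f' x) ^ 2 := by
      filter_upwards [hfluxδ, ae_restrict_mem measurableSet_Ioo] with x hfx hxmem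
      have hxpos : 0 < x := hxmem.1
      have h1 : x ^ α * x ^ (-α) = 1 := by
        rw [← Real.rpow_add hxpos]; simp
      have hid : F x ^ 2 * x ^ (-α) = x ^ α * (f' x) ^ 2 := by
        rw [hfx]
        calc (x ^ α * f' x) ^ 2 * x ^ (-α)
            = (x ^ α * x ^ (-α)) * (x ^ α * (f' x) ^ 2) := by ring
          _ = x ^ α * (f' x) ^ 2 := by rw [h1]; ring
      have hxneg : (0:ℝ) ≤ x ^ (-α) := Real.rpow_nonneg hxpos.le _
      have hclow : (c / 2) ^ 2 ≤ F x ^ 2 := by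
        have := hlower x hxmem
        have h2 : (c/2)^2 ≤ |F x| ^ 2 := by
          apply pow_le_pow_left₀ (by positivity) this
        simpa [sq_abs] using h2
      have : (c / 2) ^ 2 * x ^ (-α) ≤ F x ^ 2 * x ^ (-α) :=
        mul_le_mul_of_nonneg_right hclow hxneg
      rw [Real.norm_eq_abs, abs_of_nonneg (by positivity)]
      linarith [hid ▸ this]
    have hmeas : AEStronglyMeasurable (fun x : ℝ => (c / 2) ^ 2 * x ^ (-α))
        (volume.restrict (Ioo (0:ℝ) δ)) := by
      apply ContinuousOn.aestronglyMeasurable _ measurableSet_Ioo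
      exact continuousOn_const.mul (fun x hx =>
        (Real.continuousAt_rpow_const x (-α) (Or.inl (ne_of_gt hx.1))).continuousWithinAt)
    have hintg : IntegrableOn (fun x : ℝ => (c / 2) ^ 2 * x ^ (-α)) (Ioo (0:ℝ) δ) volume :=
      Integrable.mono' (hw.mono_set hsub) hmeas haelb
    have hrint : IntegrableOn (fun x : ℝ => x ^ (-α)) (Ioo (0:ℝ) δ) volume := by
      have h2 := hintg.const_mul (((c / 2) ^ 2)⁻¹)
      have hcne : ((c / 2) ^ 2 : ℝ) ≠ 0 := by positivity
      simpa [IntegrableOn, ← mul_assoc, inv_mul_cancel₀ hcne] using h2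
    rw [intervalIntegral.integrableOn_Ioo_rpow_iff hδpos] at hrint
    linarith
  simp only [hF0, sub_zero] at key
  constructor
  · apply squeeze_zero_norm' (a := fun x => C * Real.sqrt x)
    · have hmem : Ioc (0:ℝ) 1 ∈ nhdsWithin (0:ℝ) (Ioi 0) :=
        Ioc_mem_nhdsGT_of_mem ⟨le_refl 0, one_pos⟩
      filter_upwards [hmem] with x hx
      simpa [Real.norm_eq_abs] using key x ⟨hx.1.le, hx.2⟩
    · have : Tendsto (fun x : ℝ => C * Real.sqrt x) (nhdsWithin 0 (Ioi 0))
          (nhds (C * Real.sqrt 0)) :=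
        ((continuous_const.mul Real.continuous_sqrt).tendsto 0).mono_left nhdsWithin_le_nhds
      simpa using this
  · intro x hx
    exact key x ⟨hx.1.le, hx.2.le⟩
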